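/- (Perturbing the differential of a convolution) Let E₁, …, E_m be cochain complexes over an additive category and let M be a cochain complex with degree-n object ⊕_{i=1}^m Eᵢⁿ and lower-triangular differential d: diagonal components d_{Eᵢ} and components d_{ij} : Eⱼⁿ → Eᵢⁿ⁺¹ for i > j. Fix k ≥ 1 and suppose that for each i with i + k ≤ m we are given a degree-1 graded map φᵢ : Eᵢ → E_{i+k} such that d_{i+k,i} − φᵢ is a coboundary in the Hom complex HOM(Eᵢ, E_{i+k}). Then M is isomorphic, as a cochain complex, to a complex M' with the same underlying graded object and a lower-triangular differential d' such that d'_{ij} = d_{ij} whenever 0 ≤ i − j < k and d'_{i+k,i} = φᵢ for all i; that is, the length-k components of the differential may be replaced by the φᵢ at the expense of changing only the components of length greater than k. -/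

import Mathlib

open CategoryTheory CategoryTheory.Limits CochainComplex CochainComplex.HomComplex

/-- The degree `+1` endomorphism of the graded object `n ↦ ⊕ᵢ Eᵢⁿ` which is lower triangular,
with the differentials of the `Eᵢ` on the diagonal and the degree-one graded maps
`dc i j : Eⱼ → Eᵢ` (for `j < i`) below the diagonal. -/
noncomputable def convTotalD {C : Type*} [Category C] [Preadditive C] [HasFiniteBiproducts C]
    {m : ℕ} (E : Fin m → CochainComplex C ℤ)
    (dc : ∀ i j : Fin m, j < i → Cochain (E j) (E i) 1) (n : ℤ) :
    (⨁ fun i => (E i).X n) ⟶ (⨁ fun i => (E i).X (n + 1)) :=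
  biproduct.matrix fun j i =>
    if hji : j = i then (E j).d n (n + 1) ≫ eqToHom (congrArg (fun k => (E k).X (n + 1)) hji)
    else if hlt : j < i then (dc i j hlt).v n (n + 1) rfl
    else 0

namespace ConvPerturb

variable {C : Type*} [Category C] [Preadditive C] [HasFiniteBiproducts C]
    {m : ℕ} (E : Fin m → CochainComplex C ℤ)

/-- The `(i,j)` entry of a morphism of biproducts. -/
noncomputable def ent {n n' : ℤ}
    (f : (⨁ fun i => (E i).X n) ⟶ (⨁ fun i => (E i).X n')) (i j : Fin m) :
    (E j).X n ⟶ (E i).X n' :=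
  biproduct.ι (fun i => (E i).X n) j ≫ f ≫ biproduct.π (fun i => (E i).X n') i

lemma hom_ext_ent {n n' : ℤ}
    {f g : (⨁ fun i => (E i).X n) ⟶ (⨁ fun i => (E i).X n')}
    (h : ∀ i j, ent E f i j = ent E g i j) : f = g := by
  apply biproduct.hom_ext'
  intro j
  apply biproduct.hom_ext
  intro i
  simpa [ent] using h i j

@[simp] lemma ent_matrix {n n' : ℤ}
    (f : ∀ (j i : Fin m), (E j).X n ⟶ (E i).X n') (i j : Fin m) :
    ent E (biproduct.matrix f) i j = f j i := by
  simp [ent]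

@[simp] lemma ent_zero {n n' : ℤ} (i j : Fin m) :
    ent E (0 : (⨁ fun i => (E i).X n) ⟶ (⨁ fun i => (E i).X n')) i j = 0 := by
  simp [ent]

@[simp] lemma ent_add {n n' : ℤ}
    (f g : (⨁ fun i => (E i).X n) ⟶ (⨁ fun i => (E i).X n')) (i j : Fin m) :
    ent E (f + g) i j = ent E f i j + ent E g i j := by
  simp [ent]

@[simp] lemma ent_sub {n n' : ℤ}
    (f g : (⨁ fun i => (E i).X n) ⟶ (⨁ fun i => (E i).X n')) (i j : Fin m) :
    ent E (f - g) i j = ent E f i j - ent E g i j := by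
  simp [ent]

@[simp] lemma ent_neg {n n' : ℤ}
    (f : (⨁ fun i => (E i).X n) ⟶ (⨁ fun i => (E i).X n')) (i j : Fin m) :
    ent E (-f) i j = -ent E f i j := by
  simp [ent]

@[simp] lemma ent_sum {n n' : ℤ} {ι : Type*} (s : Finset ι)
    (f : ι → ((⨁ fun i => (E i).X n) ⟶ (⨁ fun i => (E i).X n'))) (i j : Fin m) :
    ent E (∑ p ∈ s, f p) i j = ∑ p ∈ s, ent E (f p) i j := by
  simp [ent, Preadditive.sum_comp, Preadditive.comp_sum]

lemma ent_comp {n₁ n₂ n₃ : ℤ}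
    (f : (⨁ fun i => (E i).X n₁) ⟶ (⨁ fun i => (E i).X n₂))
    (g : (⨁ fun i => (E i).X n₂) ⟶ (⨁ fun i => (E i).X n₃)) (i j : Fin m) :
    ent E (f ≫ g) i j = ∑ l : Fin m, ent E f l j ≫ ent E g i l := by
  have h : f ≫ g
      = f ≫ (∑ l : Fin m, biproduct.π (fun i => (E i).X n₂) l
          ≫ biproduct.ι (fun i => (E i).X n₂) l) ≫ g := by
    rw [biproduct.total]; simp
  rw [ent, h]
  simp only [Preadditive.sum_comp, Preadditive.comp_sum, Category.assoc, ent]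

/-- `Tri r f` : all entries of `f` of "length" `< r` vanish (in particular `f` is
lower triangular when `r = 0`). -/
def Tri (r : ℕ) {n n' : ℤ}
    (f : (⨁ fun i => (E i).X n) ⟶ (⨁ fun i => (E i).X n')) : Prop :=
  ∀ i j : Fin m, (i : ℕ) < (j : ℕ) + r → ent E f i j = 0

lemma Tri.of_le {r s : ℕ} (hrs : r ≤ s) {n n' : ℤ}
    {f : (⨁ fun i => (E i).X n) ⟶ (⨁ fun i => (E i).X n')} (hf : Tri E s f) :
    Tri E r f := fun i j h => hf i j (by omega)

lemma Tri.comp {r s : ℕ} {n₁ n₂ n₃ : ℤ}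
    {f : (⨁ fun i => (E i).X n₁) ⟶ (⨁ fun i => (E i).X n₂)}
    {g : (⨁ fun i => (E i).X n₂) ⟶ (⨁ fun i => (E i).X n₃)}
    (hf : Tri E r f) (hg : Tri E s g) : Tri E (r + s) (f ≫ g) := by
  intro i j h
  rw [ent_comp]
  apply Finset.sum_eq_zero
  intro l _
  by_cases hl : (l : ℕ) < (j : ℕ) + r
  · rw [hf l j hl, zero_comp]
  · rw [hg i l (by omega), comp_zero]

lemma Tri.sum {r : ℕ} {n n' : ℤ} {ι : Type*} {s : Finset ι}
    {f : ι → ((⨁ fun i => (E i).X n) ⟶ (⨁ fun i => (E i).X n'))}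
    (hf : ∀ p ∈ s, Tri E r (f p)) : Tri E r (∑ p ∈ s, f p) := by
  intro i j h
  rw [ent_sum]
  exact Finset.sum_eq_zero fun p hp => hf p hp i j h

lemma Tri.sub {r : ℕ} {n n' : ℤ}
    {f g : (⨁ fun i => (E i).X n) ⟶ (⨁ fun i => (E i).X n')}
    (hf : Tri E r f) (hg : Tri E r g) : Tri E r (f - g) := by
  intro i j h
  rw [ent_sub, hf i j h, hg i j h, sub_zero]

lemma Tri.add {r : ℕ} {n n' : ℤ}
    {f g : (⨁ fun i => (E i).X n) ⟶ (⨁ fun i => (E i).X n')}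
    (hf : Tri E r f) (hg : Tri E r g) : Tri E r (f + g) := by
  intro i j h
  rw [ent_add, hf i j h, hg i j h, add_zero]

lemma Tri.neg {r : ℕ} {n n' : ℤ}
    {f : (⨁ fun i => (E i).X n) ⟶ (⨁ fun i => (E i).X n')}
    (hf : Tri E r f) : Tri E r (-f) := by
  intro i j h
  rw [ent_neg, hf i j h, neg_zero]

lemma Tri.eq_zero {r : ℕ} (hr : m ≤ r) {n n' : ℤ}
    {f : (⨁ fun i => (E i).X n) ⟶ (⨁ fun i => (E i).X n')}
    (hf : Tri E r f) : f = 0 := by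
  apply hom_ext_ent
  intro i j
  rw [ent_zero]
  exact hf i j (by omega)

lemma Tri_id (n : ℤ) : Tri E 0 (𝟙 (⨁ fun i => (E i).X n)) := by
  intro i j h
  simp only [ent, Category.id_comp]
  rw [biproduct.ι_π]
  rw [dif_neg]
  intro hji
  subst hji
  omega

lemma Tri_convTotalD (dc : ∀ i j : Fin m, j < i → Cochain (E j) (E i) 1) (n : ℤ) :
    Tri E 0 (convTotalD E dc n) := by
  intro i j h
  rw [convTotalD, ent_matrix]
  rw [dif_neg (by rintro rfl; omega), dif_neg]
  intro hji
  rw [Fin.lt_def] at hji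
  omega

@[simp] lemma ent_convTotalD (dc : ∀ i j : Fin m, j < i → Cochain (E j) (E i) 1)
    (n : ℤ) (i j : Fin m) :
    ent E (convTotalD E dc n) i j =
      if hji : j = i then (E j).d n (n + 1) ≫ eqToHom (congrArg (fun k => (E k).X (n + 1)) hji)
      else if hlt : j < i then (dc i j hlt).v n (n + 1) rfl
      else 0 := by
  rw [convTotalD, ent_matrix]


section
variable (k : ℕ) (wv : ∀ i j : Fin m, (j : ℕ) + k = (i : ℕ) → Cochain (E j) (E i) 0)

/-- The strictly lower triangular matrix with entries `-(w i j)` at length `k`. -/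
noncomputable def Vmat (n : ℤ) :
    (⨁ fun i => (E i).X n) ⟶ (⨁ fun i => (E i).X n) :=
  biproduct.matrix fun j i =>
    if h : (j : ℕ) + k = (i : ℕ) then -((wv i j h).v n n (add_zero n)) else 0

/-- Iterated composition power. -/
noncomputable def cpow {n : ℤ} (f : (⨁ fun i => (E i).X n) ⟶ (⨁ fun i => (E i).X n)) :
    ℕ → ((⨁ fun i => (E i).X n) ⟶ (⨁ fun i => (E i).X n))
  | 0 => 𝟙 _
  | p + 1 => f ≫ cpow f p

lemma cpow_succ' {n : ℤ} (f : (⨁ fun i => (E i).X n) ⟶ (⨁ fun i => (E i).X n)) (p : ℕ) :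
    cpow E f (p + 1) = cpow E f p ≫ f := by
  induction p with
  | zero => simp [cpow]
  | succ p ih =>
      conv_lhs => rw [show cpow E f (p + 1 + 1) = f ≫ cpow E f (p + 1) from rfl, ih]
      rw [← Category.assoc]
      rfl

variable (hk : 1 ≤ k)
include hk

omit hk in
lemma Tri_Vmat (n : ℤ) : Tri E k (Vmat E k wv n) := by
  intro i j h
  rw [Vmat, ent_matrix, dif_neg (by omega)]

lemma Tri_cpow (n : ℤ) (p : ℕ) : Tri E p (cpow E (Vmat E k wv n) p) := by
  induction p with
  | zero =>
      intro i j h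
      exact Tri_id E n i j h
  | succ p ih =>
      have := Tri.comp E (Tri.of_le E hk (Tri_Vmat E k wv n)) ih
      rw [show (1 : ℕ) + p = p + 1 by omega] at this
      exact this

lemma cpow_eq_zero (n : ℤ) {p : ℕ} (hp : m ≤ p) :
    cpow E (Vmat E k wv n) p = 0 :=
  Tri.eq_zero E hp (Tri_cpow E k wv hk n p)

/-- The strict part of the geometric series inverse. -/
noncomputable def ρmat (n : ℤ) :
    (⨁ fun i => (E i).X n) ⟶ (⨁ fun i => (E i).X n) :=
  ∑ p ∈ Finset.range (m + 1), cpow E (Vmat E k wv n) (p + 1)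

/-- The part of the geometric series inverse of length `≥ 2k`. -/
noncomputable def σmat (n : ℤ) :
    (⨁ fun i => (E i).X n) ⟶ (⨁ fun i => (E i).X n) :=
  ∑ p ∈ Finset.range m, cpow E (Vmat E k wv n) (p + 2)

noncomputable def αmat (n : ℤ) :
    (⨁ fun i => (E i).X n) ⟶ (⨁ fun i => (E i).X n) :=
  𝟙 _ - Vmat E k wv n

noncomputable def βmat (n : ℤ) :
    (⨁ fun i => (E i).X n) ⟶ (⨁ fun i => (E i).X n) :=
  𝟙 _ + ρmat E k wv n

omit hk in
lemma ρmat_eq (n : ℤ) : ρmat E k wv n = Vmat E k wv n + σmat E k wv n := by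
  have h1 : cpow E (Vmat E k wv n) (0 + 1) = Vmat E k wv n := by
    show Vmat E k wv n ≫ 𝟙 _ = Vmat E k wv n
    simp
  rw [ρmat, Finset.sum_range_succ', h1]
  exact add_comm _ _

lemma Tri_ρmat (n : ℤ) : Tri E k (ρmat E k wv n) := by
  apply Tri.sum
  intro p _
  have := Tri.comp E (Tri_Vmat E k wv n) (Tri_cpow E k wv hk n p)
  exact Tri.of_le E (by omega) this

lemma Tri_σmat (n : ℤ) : Tri E (k + 1) (σmat E k wv n) := by
  apply Tri.sum
  intro p _
  have := Tri.comp E (Tri_Vmat E k wv n)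
    (Tri.comp E (Tri_Vmat E k wv n) (Tri_cpow E k wv hk n p))
  exact Tri.of_le E (by omega) this

lemma Vmat_comp_ρmat (n : ℤ) :
    Vmat E k wv n ≫ ρmat E k wv n = σmat E k wv n := by
  rw [ρmat, Preadditive.comp_sum]
  have h : ∀ p ∈ Finset.range (m + 1),
      Vmat E k wv n ≫ cpow E (Vmat E k wv n) (p + 1) = cpow E (Vmat E k wv n) (p + 2) := by
    intro p _; rfl
  rw [Finset.sum_congr rfl h, Finset.sum_range_succ,
    cpow_eq_zero E k wv hk n (by omega), add_zero, σmat]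

lemma ρmat_comp_Vmat (n : ℤ) :
    ρmat E k wv n ≫ Vmat E k wv n = σmat E k wv n := by
  rw [ρmat, Preadditive.sum_comp]
  have h : ∀ p ∈ Finset.range (m + 1),
      cpow E (Vmat E k wv n) (p + 1) ≫ Vmat E k wv n = cpow E (Vmat E k wv n) (p + 2) := by
    intro p _; rw [← cpow_succ']
  rw [Finset.sum_congr rfl h, Finset.sum_range_succ,
    cpow_eq_zero E k wv hk n (by omega), add_zero, σmat]

lemma αβ (n : ℤ) : αmat E k wv n ≫ βmat E k wv n = 𝟙 _ := by
  rw [αmat, βmat, Preadditive.sub_comp, Category.id_comp, Preadditive.comp_add,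
    Category.comp_id, Vmat_comp_ρmat E k wv hk n, ρmat_eq E k wv n]
  abel

lemma βα (n : ℤ) : βmat E k wv n ≫ αmat E k wv n = 𝟙 _ := by
  rw [αmat, βmat, Preadditive.add_comp, Category.id_comp, Preadditive.comp_sub,
    Category.comp_id, ρmat_comp_Vmat E k wv hk n, ρmat_eq E k wv n]
  abel

omit hk in
/-- The conjugated differential `β ≫ d ≫ α`. -/
noncomputable def pertD (dcM : ∀ i j : Fin m, j < i → Cochain (E j) (E i) 1) (n : ℤ) :
    (⨁ fun i => (E i).X n) ⟶ (⨁ fun i => (E i).X (n + 1)) :=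
  βmat E k wv n ≫ convTotalD E dcM n ≫ αmat E k wv (n + 1)

omit hk in
lemma pertD_expand (dcM : ∀ i j : Fin m, j < i → Cochain (E j) (E i) 1) (n : ℤ) :
    pertD E k wv dcM n = convTotalD E dcM n
      - convTotalD E dcM n ≫ Vmat E k wv (n + 1)
      + Vmat E k wv n ≫ convTotalD E dcM n
      + σmat E k wv n ≫ convTotalD E dcM n
      - Vmat E k wv n ≫ (convTotalD E dcM n ≫ Vmat E k wv (n + 1))
      - σmat E k wv n ≫ (convTotalD E dcM n ≫ Vmat E k wv (n + 1)) := by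
  rw [pertD, βmat, ρmat_eq E k wv n, αmat]
  simp only [Preadditive.add_comp, Preadditive.comp_sub, Preadditive.sub_comp,
    Category.id_comp, Category.comp_id, Category.assoc]
  abel

lemma ent_pertD_of_lt (dcM : ∀ i j : Fin m, j < i → Cochain (E j) (E i) 1) (n : ℤ)
    {i j : Fin m} (h : (i : ℕ) < (j : ℕ) + k) :
    ent E (pertD E k wv dcM n) i j = ent E (convTotalD E dcM n) i j := by
  rw [pertD_expand E k wv dcM n]
  simp only [ent_sub, ent_add]
  rw [Tri.comp E (Tri_convTotalD E dcM n) (Tri_Vmat E k wv (n + 1)) i j (by omega),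
    Tri.comp E (Tri_Vmat E k wv n) (Tri_convTotalD E dcM n) i j (by omega),
    Tri.comp E (Tri_σmat E k wv hk n) (Tri_convTotalD E dcM n) i j (by omega),
    Tri.comp E (Tri_Vmat E k wv n)
      (Tri.comp E (Tri_convTotalD E dcM n) (Tri_Vmat E k wv (n + 1))) i j (by omega),
    Tri.comp E (Tri_σmat E k wv hk n)
      (Tri.comp E (Tri_convTotalD E dcM n) (Tri_Vmat E k wv (n + 1))) i j (by omega)]
  abel

lemma ent_pertD_len_k (dcM : ∀ i j : Fin m, j < i → Cochain (E j) (E i) 1) (n : ℤ)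
    {i j : Fin m} (hji : j < i) (hjk : (j : ℕ) + k = (i : ℕ)) :
    ent E (pertD E k wv dcM n) i j
      = (dcM i j hji).v n (n + 1) rfl
        + ((E j).d n (n + 1) ≫ (wv i j hjk).v (n + 1) (n + 1) (add_zero _)
           - (wv i j hjk).v n n (add_zero n) ≫ (E i).d n (n + 1)) := by
  have hik : (i : ℕ) = (j : ℕ) + k := hjk.symm
  rw [pertD_expand E k wv dcM n]
  simp only [ent_sub, ent_add]
  have e1 : ent E (convTotalD E dcM n) i j = (dcM i j hji).v n (n + 1) rfl := by
    rw [ent_convTotalD, dif_neg (Fin.ne_of_lt hji), dif_pos hji]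
  have e2 : ent E (convTotalD E dcM n ≫ Vmat E k wv (n + 1)) i j
      = -((E j).d n (n + 1) ≫ (wv i j hjk).v (n + 1) (n + 1) (add_zero _)) := by
    rw [ent_comp, Finset.sum_eq_single_of_mem j (Finset.mem_univ j)]
    · rw [ent_convTotalD, dif_pos rfl, Vmat, ent_matrix, dif_pos hjk]
      simp
    · intro l _ hl
      rw [Vmat, ent_matrix, dif_neg (fun hh => hl (Fin.ext (by omega))), comp_zero]
  have e3 : ent E (Vmat E k wv n ≫ convTotalD E dcM n) i j
      = -((wv i j hjk).v n n (add_zero n) ≫ (E i).d n (n + 1)) := by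
    rw [ent_comp, Finset.sum_eq_single_of_mem i (Finset.mem_univ i)]
    · rw [Vmat, ent_matrix, dif_pos hjk, ent_convTotalD, dif_pos rfl]
      simp
    · intro l _ hl
      rw [Vmat, ent_matrix, dif_neg (fun hh => hl (Fin.ext (by omega))), zero_comp]
  rw [e1, e2, e3,
    Tri.comp E (Tri_σmat E k wv hk n) (Tri_convTotalD E dcM n) i j (by omega),
    Tri.comp E (Tri_Vmat E k wv n)
      (Tri.comp E (Tri_convTotalD E dcM n) (Tri_Vmat E k wv (n + 1))) i j (by omega),
    Tri.comp E (Tri_σmat E k wv hk n)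
      (Tri.comp E (Tri_convTotalD E dcM n) (Tri_Vmat E k wv (n + 1))) i j (by omega)]
  abel

omit hk in
/-- The entries of the conjugated differential, as cochains. -/
noncomputable def dcNmat (dcM : ∀ i j : Fin m, j < i → Cochain (E j) (E i) 1)
    (i j : Fin m) (_ : j < i) : Cochain (E j) (E i) 1 :=
  Cochain.mk fun p q hpq => ent E (pertD E k wv dcM p) i j ≫ eqToHom (congrArg (E i).X hpq)

lemma convTotalD_dcNmat (dcM : ∀ i j : Fin m, j < i → Cochain (E j) (E i) 1) (n : ℤ) :
    convTotalD E (dcNmat E k wv dcM) n = pertD E k wv dcM n := by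
  apply hom_ext_ent E
  intro i j
  rw [ent_convTotalD]
  by_cases hij : j = i
  · subst hij
    rw [dif_pos rfl, ent_pertD_of_lt E k wv hk dcM n (by omega), ent_convTotalD, dif_pos rfl]
  · rw [dif_neg hij]
    by_cases hlt : j < i
    · rw [dif_pos hlt]
      show ent E (pertD E k wv dcM n) i j ≫ eqToHom (congrArg (E i).X rfl) = _
      simp
    · rw [dif_neg hlt]
      have hij' : (i : ℕ) < (j : ℕ) := by
        rcases lt_trichotomy j i with h | h | h
        · exact absurd h hlt
        · exact absurd h hij
        · exact Fin.lt_def.mp h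
      rw [ent_pertD_of_lt E k wv hk dcM n (by omega), ent_convTotalD,
        dif_neg hij, dif_neg hlt]

lemma pertD_sq (dcM : ∀ i j : Fin m, j < i → Cochain (E j) (E i) 1)
    (sqM : ∀ n, convTotalD E dcM n ≫ convTotalD E dcM (n + 1) = 0) (n : ℤ) :
    pertD E k wv dcM n ≫ pertD E k wv dcM (n + 1) = 0 := by
  rw [pertD, pertD]
  slice_lhs 3 4 => rw [αβ E k wv hk (n + 1)]
  rw [Category.id_comp]
  slice_lhs 2 3 => rw [sqM n]
  simp

lemma dcNmat_of_lt (dcM : ∀ i j : Fin m, j < i → Cochain (E j) (E i) 1)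
    (i j : Fin m) (hji : j < i) (h : (i : ℕ) - (j : ℕ) < k) :
    dcNmat E k wv dcM i j hji = dcM i j hji := by
  have hji' : (j : ℕ) < (i : ℕ) := Fin.lt_def.mp hji
  ext p q hpq
  obtain rfl : q = p + 1 := hpq.symm
  show ent E (pertD E k wv dcM p) i j ≫ eqToHom (congrArg (E i).X rfl) = _
  rw [eqToHom_refl, Category.comp_id, ent_pertD_of_lt E k wv hk dcM p (by omega),
    ent_convTotalD, dif_neg (Fin.ne_of_lt hji), dif_pos hji]

lemma dcNmat_of_len_k (dcM : ∀ i j : Fin m, j < i → Cochain (E j) (E i) 1)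
    (i j : Fin m) (hji : j < i) (hjk : (j : ℕ) + k = (i : ℕ))
    (φc : Cochain (E j) (E i) 1)
    (hw : dcM i j hji - φc = δ 0 1 (wv i j hjk)) :
    dcNmat E k wv dcM i j hji = φc := by
  ext p q hpq
  obtain rfl : q = p + 1 := hpq.symm
  show ent E (pertD E k wv dcM p) i j ≫ eqToHom (congrArg (E i).X rfl) = _
  rw [eqToHom_refl, Category.comp_id, ent_pertD_len_k E k wv hk dcM p hji hjk]
  have h2 := Cochain.congr_v hw p (p + 1) rfl
  rw [Cochain.sub_v, δ_v 0 1 rfl _ p (p + 1) rfl p (p + 1) (by omega) rfl,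
    Int.negOnePow_one] at h2
  simp only [neg_smul, one_smul, Units.neg_smul] at h2
  rw [← sub_eq_add_neg] at h2
  have h3 : φc.v p (p + 1) rfl = (dcM i j hji).v p (p + 1) rfl
      - ((wv i j hjk).v p p (add_zero p) ≫ (E i).d p (p + 1)
         - (E j).d p (p + 1) ≫ (wv i j hjk).v (p + 1) (p + 1) (add_zero _)) := by
    rw [eq_sub_iff_add_eq, ← h2]
    abel
  rw [h3]
  abel

end
end ConvPerturb

/-- Perturbing the differential of a convolution: if `M` is a convolution on `E₁, …, E_m` and,
for a fixed `k ≥ 1`, each length-`k` component `d_{i+k,i}` of its differential differs from a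
prescribed degree-one graded map `φ` by a coboundary in the Hom complex, then `M` is isomorphic
to a convolution whose components of length `< k` agree with those of `M` and whose length-`k`
components are the prescribed maps `φ`. -/
theorem convolution_perturb_differential
    {C : Type*} [Category C] [Preadditive C] [HasFiniteBiproducts C]
    {m : ℕ} (E : Fin m → CochainComplex C ℤ)
    (dcM : ∀ i j : Fin m, j < i → Cochain (E j) (E i) 1)
    (sqM : ∀ n, convTotalD E dcM n ≫ convTotalD E dcM (n + 1) = 0)
    (k : ℕ) (hk : 1 ≤ k)
    (φ : ∀ i j : Fin m, j < i → (j : ℕ) + k = (i : ℕ) → Cochain (E j) (E i) 1)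
    (hφ : ∀ (i j : Fin m) (hji : j < i) (hjk : (j : ℕ) + k = (i : ℕ)),
      ∃ w : Cochain (E j) (E i) 0, dcM i j hji - φ i j hji hjk = δ 0 1 w) :
    ∃ (dcN : ∀ i j : Fin m, j < i → Cochain (E j) (E i) 1)
      (sqN : ∀ n, convTotalD E dcN n ≫ convTotalD E dcN (n + 1) = 0),
      (∀ (i j : Fin m) (hji : j < i), (i : ℕ) - (j : ℕ) < k → dcN i j hji = dcM i j hji) ∧
      (∀ (i j : Fin m) (hji : j < i) (hjk : (j : ℕ) + k = (i : ℕ)),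
        dcN i j hji = φ i j hji hjk) ∧
      Nonempty ((CochainComplex.of (fun n => ⨁ fun i => (E i).X n) (convTotalD E dcM) sqM) ≅
        (CochainComplex.of (fun n => ⨁ fun i => (E i).X n) (convTotalD E dcN) sqN)) := by
  open ConvPerturb in
  choose w hw using hφ
  have hlt : ∀ (i j : Fin m), (j : ℕ) + k = (i : ℕ) → j < i := by
    intro i j h
    rw [Fin.lt_def]
    omega
  refine ⟨dcNmat E k (fun i j h => w i j (hlt i j h) h) dcM, fun n => ?_, ?_, ?_, ?_⟩
  · rw [convTotalD_dcNmat E k _ hk dcM n, convTotalD_dcNmat E k _ hk dcM (n + 1)]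
    exact pertD_sq E k _ hk dcM sqM n
  · intro i j hji h
    exact dcNmat_of_lt E k _ hk dcM i j hji h
  · intro i j hji hjk
    exact dcNmat_of_len_k E k _ hk dcM i j hji hjk (φ i j hji hjk) (hw i j (hlt i j hjk) hjk)
  · refine ⟨HomologicalComplex.Hom.isoOfComponents
      (fun n => ⟨αmat E k (fun i j h => w i j (hlt i j h) h) n,
        βmat E k (fun i j h => w i j (hlt i j h) h) n,
        αβ E k _ hk n, βα E k _ hk n⟩) ?_⟩
    intro n n' hnn'
    obtain rfl : n + 1 = n' := hnn'
    show αmat E k _ n ≫ _ = _ ≫ αmat E k _ (n + 1)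
    dsimp only [CochainComplex.of]
    rw [CochainComplex.of_d, CochainComplex.of_d,
      convTotalD_dcNmat E k (fun i j h => w i j (hlt i j h) h) hk dcM n, pertD,
      ← Category.assoc, αβ E k _ hk n, Category.id_comp]
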